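/- Let φ : ℝ → ℝ be continuous and 2π-periodic with ∫₀^{2π} φ(t) dt = 0, and let Ψ(t) := ∫₀^{t} φ(s) ds (which is then 2π-periodic). Then there is a well-defined function ψ : ℝ² ∖ {0} → ℝ satisfying ψ(s·(cos t, sin t)) = Ψ(t) for all s > 0 and t ∈ ℝ, this ψ is positively 0-homogeneous, and ψ is differentiable at every x = (x₁, x₂) ≠ 0 with gradient ∇ψ(x) = φ(x/‖x‖) · x^⊥ / ‖x‖², where x^⊥ := (−x₂, x₁). -/

import Mathlib

open Real

/-- From a continuous `2π`-periodic function `φ` with zero average one builds a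
`0`-homogeneous function `ψ` on `ℝ² \ {0}` whose value on the ray of angle `t` is the
angular primitive `Ψ(t) = ∫₀ᵗ φ`, and whose gradient at `x ≠ 0` is
`φ(x/‖x‖) • x^⊥ / ‖x‖²`, where `x^⊥ = (-x₂, x₁)`. -/
theorem exists_zero_homogeneous_angular_primitive (φ : ℝ → ℝ) (hφc : Continuous φ)
    (hφp : Function.Periodic φ (2 * π))
    (hφ0 : ∫ t in (0:ℝ)..(2 * π), φ t = 0)
    (Ψ : ℝ → ℝ) (hΨ : ∀ t, Ψ t = ∫ s in (0:ℝ)..t, φ s) :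
    ∃ ψ : EuclideanSpace ℝ (Fin 2) → ℝ,
      (∀ s t : ℝ, 0 < s →
        ψ (s • (WithLp.toLp 2 ![Real.cos t, Real.sin t] : EuclideanSpace ℝ (Fin 2))) = Ψ t) ∧
      (∀ s : ℝ, 0 < s → ∀ x : EuclideanSpace ℝ (Fin 2), x ≠ 0 → ψ (s • x) = ψ x) ∧
      (∀ x : EuclideanSpace ℝ (Fin 2), x ≠ 0 → ∀ t : ℝ,
        ‖x‖⁻¹ • x = (WithLp.toLp 2 ![Real.cos t, Real.sin t] : EuclideanSpace ℝ (Fin 2)) →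
        HasGradientAt ψ
          ((φ t / ‖x‖ ^ 2) • (WithLp.toLp 2 ![-(x 1), x 0] : EuclideanSpace ℝ (Fin 2))) x) := by
  -- the complex coordinate
  set zc : EuclideanSpace ℝ (Fin 2) → ℂ := fun x => (x 0 : ℂ) + (x 1 : ℂ) * Complex.I with hzc
  have hzc_ne : ∀ x : EuclideanSpace ℝ (Fin 2), x ≠ 0 → zc x ≠ 0 := by
    intro x hx
    simp only [hzc, ne_eq, Complex.ext_iff, Complex.add_re, Complex.ofReal_re, Complex.mul_re,
      Complex.I_re, Complex.I_im, Complex.ofReal_im, Complex.add_im, Complex.mul_im]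
    intro h
    apply hx
    ext i
    fin_cases i <;> simp_all
  -- Ψ is periodic
  have hΨp : Function.Periodic Ψ (2 * π) := by
    intro u
    rw [hΨ, hΨ, ← intervalIntegral.integral_add_adjacent_intervals
      (hφc.intervalIntegrable 0 u) (hφc.intervalIntegrable u (u + 2*π)),
      hφp.intervalIntegral_add_eq u 0]
    simp [hφ0]
  -- Ψ factors through angles
  have hΨA : ∀ a b : ℝ, (a : Real.Angle) = (b : Real.Angle) → Ψ a = Ψ b := by
    intro a b h
    rw [Real.Angle.angle_eq_iff_two_pi_dvd_sub] at h
    obtain ⟨k, hk⟩ := h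
    have := hΨp.sub_int_mul_eq (x := a) k
    rw [show a - k * (2*π) = b by linarith [hk]] at this
    exact this.symm
  -- key angle identity
  have hkey : ∀ (t : ℝ) (y : ℂ), y ≠ 0 →
      (Complex.arg y : Real.Angle) =
        ((t + Complex.arg (Complex.exp (-(t:ℂ) * Complex.I) * y) : ℝ) : Real.Angle) := by
    intro t y hy
    have he : Complex.exp ((t:ℂ) * Complex.I) ≠ 0 := Complex.exp_ne_zero _
    have h1 : y = Complex.exp ((t:ℂ) * Complex.I) *
        (Complex.exp (-(t:ℂ) * Complex.I) * y) := by
      rw [← mul_assoc, ← Complex.exp_add]; ring_nf; simp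
    have h2 : (Complex.arg (Complex.exp ((t:ℂ) * Complex.I)) : Real.Angle)
        = (t : Real.Angle) := by
      rw [Complex.exp_mul_I, ← Complex.ofReal_cos, ← Complex.ofReal_sin]
      have := Complex.arg_cos_add_sin_mul_I_coe_angle (t : Real.Angle)
      rwa [Real.Angle.cos_coe, Real.Angle.sin_coe] at this
    rw [Real.Angle.coe_add, ← h2,
      ← Complex.arg_mul_coe_angle he (mul_ne_zero (Complex.exp_ne_zero _) hy), ← h1]
  refine ⟨fun x => Ψ (Complex.arg (zc x)), ?_, ?_, ?_⟩
  · -- value on rays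
    intro s t hs
    show Ψ (Complex.arg (zc (s • (WithLp.toLp 2 ![Real.cos t, Real.sin t] : EuclideanSpace ℝ (Fin 2))))) = Ψ t
    have h1 : zc (s • (WithLp.toLp 2 ![Real.cos t, Real.sin t] : EuclideanSpace ℝ (Fin 2)))
        = (s : ℂ) * ((Real.cos t : ℂ) + (Real.sin t : ℂ) * Complex.I) := by
      have h0 : (s • (WithLp.toLp 2 ![Real.cos t, Real.sin t] : EuclideanSpace ℝ (Fin 2))) 0
          = s * Real.cos t := by simp
      have h1' : (s • (WithLp.toLp 2 ![Real.cos t, Real.sin t] : EuclideanSpace ℝ (Fin 2))) 1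
          = s * Real.sin t := by simp
      rw [hzc]; simp only [h0, h1']; push_cast; ring
    rw [h1]
    refine hΨA _ _ ?_
    have := Complex.arg_mul_cos_add_sin_mul_I_coe_angle hs (t : Real.Angle)
    rwa [Real.Angle.cos_coe, Real.Angle.sin_coe] at this
  · -- homogeneity
    intro s hs x hx
    show Ψ (Complex.arg (zc (s • x))) = Ψ (Complex.arg (zc x))
    have h1 : zc (s • x) = (s : ℂ) * zc x := by
      have h0 : (s • x) 0 = s * x 0 := by simp
      have h1' : (s • x) 1 = s * x 1 := by simp
      rw [hzc]; simp only [h0, h1']; push_cast; ring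
    rw [h1, Complex.arg_real_mul _ hs]
  · -- the gradient
    intro x hx t hxt
    have hxn : (0:ℝ) < ‖x‖ := norm_pos_iff.mpr hx
    have hx0 : x 0 = ‖x‖ * Real.cos t := by
      have := congrArg (· 0) hxt
      simp only [PiLp.toLp_apply, PiLp.smul_apply, smul_eq_mul, Matrix.cons_val_zero] at this
      field_simp at this ⊢
      linarith [this]
    have hx1 : x 1 = ‖x‖ * Real.sin t := by
      have := congrArg (· 1) hxt
      simp only [PiLp.toLp_apply, PiLp.smul_apply, smul_eq_mul, Matrix.cons_val_one, Matrix.head_cons, Matrix.cons_val_zero] at this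
      field_simp at this ⊢
      linarith [this]
    set c : ℂ := Complex.exp (-(t:ℂ) * Complex.I) with hc
    have hcz : c * zc x = (‖x‖ : ℂ) := by
      rw [hzc, hc]
      simp only [hx0, hx1]
      push_cast
      rw [show ((‖x‖:ℂ) * Complex.cos t + ‖x‖ * Complex.sin t * Complex.I)
          = (‖x‖:ℂ) * (Complex.cos t + Complex.sin t * Complex.I) by ring,
        ← Complex.exp_mul_I, ← mul_assoc, mul_comm (Complex.exp (-(t:ℂ) * Complex.I)),
        mul_assoc, ← Complex.exp_add]
      ring_nf
      simp
    -- the linear coordinate map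
    set zL : EuclideanSpace ℝ (Fin 2) →L[ℝ] ℂ :=
      Complex.ofRealCLM.comp (EuclideanSpace.proj 0) +
        Complex.I • Complex.ofRealCLM.comp (EuclideanSpace.proj 1) with hzL
    have hzLe : ∀ y : EuclideanSpace ℝ (Fin 2), zL y = zc y := by
      intro y; simp [hzL, hzc, mul_comm]
    -- derivative of arg at ↑‖x‖
    have hw0 : (‖x‖ : ℂ) ∈ Complex.slitPlane := by
      rw [Complex.mem_slitPlane_iff]; left; simpa using hxn
    set A : ℂ →L[ℝ] ℝ := Complex.imCLM.comp
      ((ContinuousLinearMap.smulRight (1 : ℂ →L[ℂ] ℂ) ((‖x‖:ℂ))⁻¹).restrictScalars ℝ) with hA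
    have harg : HasFDerivAt Complex.arg A (‖x‖:ℂ) := by
      have hlog := ((Complex.hasDerivAt_log hw0).hasFDerivAt).restrictScalars ℝ
      have h2 := (Complex.imCLM.hasFDerivAt (x := Complex.log (‖x‖:ℂ))).comp _ hlog
      exact h2.congr_of_eventuallyEq
        (Filter.EventuallyEq.of_eq (funext fun w => (Complex.log_im w).symm))
    set M : EuclideanSpace ℝ (Fin 2) →L[ℝ] ℂ := c • zL with hM
    have hMd : HasFDerivAt (fun y => c * zc y) M x := by
      refine M.hasFDerivAt.congr_of_eventuallyEq (Filter.EventuallyEq.of_eq (funext fun y => ?_))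
      simp [hM, hzLe y]
    have hcomp : HasFDerivAt (fun y => Complex.arg (c * zc y)) (A.comp M) x := by
      have harg' : HasFDerivAt Complex.arg A (c * zc x) := hcz ▸ harg
      exact harg'.comp x hMd
    have hadd : HasFDerivAt (fun y => t + Complex.arg (c * zc y)) (A.comp M) x :=
      hcomp.const_add t
    -- derivative of Ψ
    have hΨd : HasDerivAt Ψ (φ t) t := by
      have h := (hφc.integral_hasStrictDerivAt 0 t).hasDerivAt
      exact (funext hΨ : Ψ = _) ▸ h
    have hval : t + Complex.arg (c * zc x) = t := by
      rw [hcz, Complex.arg_ofReal_of_nonneg hxn.le, add_zero]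
    have hΨd' : HasDerivAt Ψ (φ t) (t + Complex.arg (c * zc x)) := by rw [hval]; exact hΨd
    have hg : HasFDerivAt (fun y => Ψ (t + Complex.arg (c * zc y)))
        (φ t • (A.comp M)) x := hΨd'.comp_hasFDerivAt x hadd
    -- ψ agrees with the local expression near x
    have heq : (fun y : EuclideanSpace ℝ (Fin 2) => Ψ (Complex.arg (zc y)))
        =ᶠ[nhds x] fun y => Ψ (t + Complex.arg (c * zc y)) := by
      filter_upwards [IsOpen.mem_nhds isOpen_compl_singleton hx] with y hy
      exact hΨA _ _ (hkey t (zc y) (hzc_ne y hy))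
    have hψ : HasFDerivAt (fun y : EuclideanSpace ℝ (Fin 2) => Ψ (Complex.arg (zc y)))
        (φ t • (A.comp M)) x := hg.congr_of_eventuallyEq heq
    rw [hasGradientAt_iff_hasFDerivAt]
    refine (hψ.congr_fderiv ?_); symm
    -- identify the gradient
    ext y
    simp only [InnerProductSpace.toDual_apply_apply, PiLp.toLp_apply, PiLp.inner_apply, RCLike.inner_apply,
      Fin.sum_univ_two, PiLp.smul_apply, smul_eq_mul, Matrix.cons_val_zero, Matrix.cons_val_one,
      Matrix.head_cons, conj_trivial, ContinuousLinearMap.smul_apply,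
      ContinuousLinearMap.coe_comp', Function.comp_apply, ContinuousLinearMap.coe_smul',
      Pi.smul_apply, hM, hA, ContinuousLinearMap.coe_restrictScalars',
      ContinuousLinearMap.smulRight_apply, ContinuousLinearMap.one_apply,
      Complex.imCLM_apply, smul_eq_mul]
    rw [hzLe y, hzc]
    have hcre : c.re = Real.cos t := by
      rw [hc, show -(t:ℂ) = ((-t : ℝ) : ℂ) by push_cast; ring, Complex.exp_ofReal_mul_I_re,
        Real.cos_neg]
    have hcim : c.im = -Real.sin t := by
      rw [hc, show -(t:ℂ) = ((-t : ℝ) : ℂ) by push_cast; ring, Complex.exp_ofReal_mul_I_im,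
        Real.sin_neg]
    rw [show ((‖x‖:ℂ))⁻¹ = ((‖x‖⁻¹ : ℝ) : ℂ) by push_cast; ring]
    simp only [Complex.smul_re, Complex.smul_im, Complex.mul_im, Complex.mul_re,
      Complex.add_re, Complex.add_im, Complex.ofReal_re, Complex.ofReal_im,
      Complex.I_re, Complex.I_im, hcre, hcim, hx0, hx1]
    field_simp
    ring
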